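/- For every integer n ≥ 0, ∑_{j=0}^{n} (-1)^{n-j} binom(n+j, n-j) C_j = (if n = 0 then 1 else 0). -/

import Mathlib

lemma two_choose (k : ℕ) : 2 * (k + 1).choose 2 = (k + 1) * k := by
  induction k with
  | zero => simp
  | succ k ih =>
    rw [Nat.choose_succ_succ (k + 1) 1, Nat.mul_add, ih, Nat.choose_one_right]
    ring

lemma cat_rec (m : ℕ) : (m + 3) * catalan (m + 2) = 2 * (2 * m + 3) * catalan (m + 1) := by
  have h1 := succ_mul_catalan_eq_centralBinom (m + 2)
  have h2 := Nat.succ_mul_centralBinom_succ (m + 1)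
  have h3 := succ_mul_catalan_eq_centralBinom (m + 1)
  have key : (m + 2) * ((m + 3) * catalan (m + 2))
      = (m + 2) * (2 * (2 * m + 3) * catalan (m + 1)) := by
    rw [show m + 2 + 1 = m + 3 from rfl] at h1
    rw [h1]
    calc (m + 2) * (m + 1 + 1).centralBinom
        = (m + 1 + 1) * (m + 1 + 1).centralBinom := by ring_nf
      _ = 2 * (2 * (m + 1) + 1) * (m + 1).centralBinom := h2
      _ = 2 * (2 * m + 3) * ((m + 1 + 1) * catalan (m + 1)) := by rw [h3]; ring_nf
      _ = (m + 2) * (2 * (2 * m + 3) * catalan (m + 1)) := by ring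
  exact Nat.eq_of_mul_eq_mul_left (by omega) key

lemma choose_step (m k : ℕ) :
    (2 * m + 4) * (2 * m + 3) * (2 * m + 4 + k).choose k
      = (2 * m + 4 + k) * (k + 1) * (2 * m + 3 + k).choose (k + 1) := by
  have hs1 : (2 * m + 4 + k).choose k = (2 * m + 4 + k).choose (2 * m + 4) := by
    have := Nat.choose_symm (n := 2 * m + 4 + k) (k := 2 * m + 4) (by omega)
    rwa [show 2 * m + 4 + k - (2 * m + 4) = k from by omega] at this
  have hs2 : (2 * m + 3 + k).choose (k + 1) = (2 * m + 3 + k).choose (2 * m + 2) := by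
    have := Nat.choose_symm (n := 2 * m + 3 + k) (k := 2 * m + 2) (by omega)
    rwa [show 2 * m + 3 + k - (2 * m + 2) = k + 1 from by omega] at this
  have h1 := Nat.add_one_mul_choose_eq (2 * m + 3 + k) (2 * m + 3)
  have h2 := Nat.choose_succ_right_eq (2 * m + 3 + k) (2 * m + 2)
  rw [show 2 * m + 3 + k - (2 * m + 2) = k + 1 from by omega] at h2
  rw [hs1, hs2]
  have hh1 : (2 * m + 4 + k) * (2 * m + 3 + k).choose (2 * m + 3)
      = (2 * m + 4 + k).choose (2 * m + 4) * (2 * m + 4) := by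
    simpa [Nat.succ_eq_add_one, show 2 * m + 3 + k + 1 = 2 * m + 4 + k from by omega,
      show 2 * m + 3 + 1 = 2 * m + 4 from rfl] using h1
  calc (2 * m + 4) * (2 * m + 3) * (2 * m + 4 + k).choose (2 * m + 4)
      = (2 * m + 3) * ((2 * m + 4 + k).choose (2 * m + 4) * (2 * m + 4)) := by ring
    _ = (2 * m + 3) * ((2 * m + 4 + k) * (2 * m + 3 + k).choose (2 * m + 3)) := by rw [hh1]
    _ = (2 * m + 4 + k) * ((2 * m + 3 + k).choose (2 * m + 3) * (2 * m + 3)) := by ring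
    _ = (2 * m + 4 + k) * ((2 * m + 3 + k).choose (2 * m + 2) * (k + 1)) := by rw [h2]
    _ = (2 * m + 4 + k) * (k + 1) * (2 * m + 3 + k).choose (2 * m + 2) := by ring

lemma aux (n : ℕ) : ∀ m, m < n →
    ((n : ℤ) * (n + 1)) * ∑ j ∈ Finset.range (m + 1),
        (-1 : ℤ) ^ (n - j) * (Nat.choose (n + j) (n - j) : ℤ) * (catalan j : ℤ)
      = (-1 : ℤ) ^ (n - m) * ((m : ℤ) + 1) * ((m : ℤ) + 2)
          * (Nat.choose (n + m + 1) (n - m - 1) : ℤ) * (catalan (m + 1) : ℤ) := by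
  intro m
  induction m with
  | zero =>
    intro h
    obtain ⟨k, rfl⟩ : ∃ k, n = k + 1 := ⟨n - 1, by omega⟩
    have hc : 2 * (k + 2).choose k = (k + 1) * (k + 2) := by
      have hs : (k + 2).choose k = (k + 2).choose 2 := by
        have := Nat.choose_symm (n := k + 2) (k := 2) (by omega)
        rwa [show k + 2 - 2 = k from by omega] at this
      rw [hs, show k + 2 = (k + 1) + 1 from rfl, two_choose]
      ring
    have hcz : (2 : ℤ) * ((k + 2).choose k : ℤ) = ((k : ℤ) + 1) * ((k : ℤ) + 2) := by
      exact_mod_cast hc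
    rw [Finset.sum_range_one]
    simp only [Nat.sub_zero, Nat.add_zero, Nat.zero_add, Nat.choose_self, catalan_zero,
      catalan_one, Nat.cast_one, Nat.cast_zero, mul_one, show k + 1 + 1 = k + 2 from rfl,
      show k + 1 - 1 = k from by omega]
    push_cast
    linear_combination ((-1 : ℤ) ^ k) * hcz
  | succ m ih =>
    intro h
    obtain ⟨k, rfl⟩ : ∃ k, n = m + 2 + k := ⟨n - (m + 2), by omega⟩
    have ihe := ih (by omega)
    rw [Finset.sum_range_succ, mul_add, ihe]
    have e2 : ((m : ℤ) + 3) * (catalan (m + 2) : ℤ)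
        = 2 * (2 * (m : ℤ) + 3) * (catalan (m + 1) : ℤ) := by
      exact_mod_cast cat_rec m
    have e3 : ((2 : ℤ) * (m : ℤ) + 4) * (2 * (m : ℤ) + 3) * ((2 * m + 4 + k).choose k : ℤ)
        = (2 * (m : ℤ) + 4 + (k : ℤ)) * ((k : ℤ) + 1) * ((2 * m + 3 + k).choose (k + 1) : ℤ) := by
      exact_mod_cast choose_step m k
    simp only [show m + 2 + k - m = k + 2 from by omega,
      show m + 2 + k - (m + 1) = k + 1 from by omega,
      show m + 2 + k - (m + 1) - 1 = k from by omega,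
      show m + 2 + k - m - 1 = k + 1 from by omega,
      show m + 2 + k + (m + 1) = 2 * m + 3 + k from by omega,
      show m + 2 + k + (m + 1) + 1 = 2 * m + 4 + k from by omega,
      show 2 * m + 3 + k + 1 = 2 * m + 4 + k from by omega,
      show m + 2 + k + m + 1 = 2 * m + 3 + k from by omega,
      show m + 1 + 1 = m + 2 from rfl]
    push_cast
    simp only [pow_succ]
    linear_combination ((-1 : ℤ) ^ k) * ((m : ℤ) + 2) * ((2 * m + 4 + k).choose k : ℤ) * e2
      + ((-1 : ℤ) ^ k) * (catalan (m + 1) : ℤ) * e3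

theorem stmt_1 (n : ℕ) :
    ∑ j ∈ Finset.range (n + 1),
        (-1 : ℤ) ^ (n - j) * (Nat.choose (n + j) (n - j) : ℤ) * (catalan j : ℤ)
      = if n = 0 then 1 else 0 := by
  rcases Nat.eq_zero_or_pos n with rfl | hn
  · simp
  · obtain ⟨N, rfl⟩ : ∃ N, n = N + 1 := ⟨n - 1, by omega⟩
    simp only [Nat.add_eq_zero, and_false, if_false, Nat.succ_ne_zero]
    rw [Finset.sum_range_succ]
    have hA := aux (N + 1) N (by omega)
    simp only [show N + 1 - N = 1 from by omega, show N + 1 - N - 1 = 0 from by omega,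
      Nat.choose_zero_right, Nat.sub_self, Nat.cast_one, mul_one, pow_one, pow_zero] at hA ⊢
    push_cast at hA ⊢
    have hD : ((N : ℤ) + 1) * ((N : ℤ) + 1 + 1) ≠ 0 := by positivity
    have hS : (∑ j ∈ Finset.range (N + 1),
        (-1 : ℤ) ^ (N + 1 - j) * (Nat.choose (N + 1 + j) (N + 1 - j) : ℤ) * (catalan j : ℤ))
        = -(catalan (N + 1) : ℤ) := by
      apply mul_left_cancel₀ hD
      linear_combination hA
    rw [hS]
    ring
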